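/- Let H be a finite-dimensional complex inner product space, let Π and Δ be orthogonal projections on H, and let U = (2Π − I)(2Δ − I). Let ψ ∈ ker Π and set w = (Π − ΠΔΠ)⁺ Δ ψ. Then w ∈ im Π, and U(ψ + w) = (2P_{ker Π ∩ ker Δ} − I)ψ + w, where P_{ker Π ∩ ker Δ} is the orthogonal projection onto ker Π ∩ ker Δ. (In other words, U transduces ψ into (2P_{ker Π ∩ ker Δ} − I)ψ with catalyst w.) -/

import Mathlib

open LinearMap

/-- The orthogonal projection onto a submodule, as an endomorphism of the ambient space. -/
noncomputable def projL {H : Type*} [NormedAddCommGroup H] [InnerProductSpace ℂ H]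
    (K : Submodule ℂ H) [K.HasOrthogonalProjection] : H →ₗ[ℂ] H :=
  K.subtype ∘ₗ K.orthogonalProjectionOnto.toLinearMap

/-- The four Moore–Penrose equations: `B` is the Moore–Penrose pseudoinverse of `A`. -/
def IsMPInv {H : Type*} [NormedAddCommGroup H] [InnerProductSpace ℂ H]
    [FiniteDimensional ℂ H] (A B : H →ₗ[ℂ] H) : Prop :=
  A ∘ₗ B ∘ₗ A = A ∧ B ∘ₗ A ∘ₗ B = B ∧
    adjoint (A ∘ₗ B) = A ∘ₗ B ∧ adjoint (B ∘ₗ A) = B ∘ₗ A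

/-- Effective gap transducer: `U = (2Π − I)(2Δ − I)` transduces `ψ ∈ ker Π` into
`(2 P_{ker Π ∩ ker Δ} − I) ψ` with catalyst `w = (Π − ΠΔΠ)⁺ Δ ψ ∈ im Π`. -/
theorem stmt0 {H : Type*} [NormedAddCommGroup H] [InnerProductSpace ℂ H]
    [FiniteDimensional ℂ H]
    (Pr Dl : H →ₗ[ℂ] H)
    (hPr : Pr ∘ₗ Pr = Pr) (hPra : adjoint Pr = Pr)
    (hDl : Dl ∘ₗ Dl = Dl) (hDla : adjoint Dl = Dl)
    (B : H →ₗ[ℂ] H) (hB : IsMPInv (Pr - Pr ∘ₗ Dl ∘ₗ Pr) B)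
    (ψ : H) (hψ : ψ ∈ ker Pr)
    (w : H) (hw : w = B (Dl ψ))
    (U : H →ₗ[ℂ] H)
    (hU : U = ((2 : ℂ) • Pr - LinearMap.id) ∘ₗ ((2 : ℂ) • Dl - LinearMap.id)) :
    w ∈ range Pr ∧
      U (ψ + w) = (((2 : ℂ) • projL (ker Pr ⊓ ker Dl) - LinearMap.id : H →ₗ[ℂ] H)) ψ + w := by
  set A : H →ₗ[ℂ] H := Pr - Pr ∘ₗ Dl ∘ₗ Pr with hAdef
  obtain ⟨m1, m2, m3, m4⟩ := hB
  have hψ0 : Pr ψ = 0 := hψ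
  -- pointwise idempotence
  have hPp : ∀ x, Pr (Pr x) = Pr x := fun x => LinearMap.ext_iff.mp hPr x
  have hDp : ∀ x, Dl (Dl x) = Dl x := fun x => LinearMap.ext_iff.mp hDl x
  -- symmetry of Pr and Dl in the inner ℂ product
  have iP : ∀ x y : H, (inner ℂ (Pr x) y : ℂ) = inner ℂ x (Pr y) := fun x y => by
    rw [show Pr x = adjoint Pr x from by rw [hPra], adjoint_inner_left]
  have iD : ∀ x y : H, (inner ℂ (Dl x) y : ℂ) = inner ℂ x (Dl y) := fun x y => by
    rw [show Dl x = adjoint Dl x from by rw [hDla], adjoint_inner_left]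
  -- pointwise MP equations
  have mp1 : ∀ x, A (B (A x)) = A x := fun x => LinearMap.ext_iff.mp m1 x
  have mp2 : ∀ x, B (A (B x)) = B x := fun x => LinearMap.ext_iff.mp m2 x
  -- A is self-adjoint
  have hAsa : adjoint A = A := by
    rw [hAdef, map_sub, adjoint_comp, adjoint_comp, hPra, hDla, comp_assoc]
  -- Pr ∘ A = A, pointwise
  have hAx : ∀ x, A x = Pr x - Pr (Dl (Pr x)) := fun x => rfl
  have hPrA : ∀ x, Pr (A x) = A x := fun x => by
    rw [hAx x]; simp only [map_sub, hPp]
  -- Q := A ∘ B is self-adjoint : inner ℂ symmetry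
  have hQsym : ∀ x y : H, (inner ℂ (A (B x)) y : ℂ) = inner ℂ x (A (B y)) := fun x y => by
    have h := adjoint_inner_left (A ∘ₗ B) y x
    rw [m3] at h
    exact h
  -- adjoint B ∘ A = A ∘ B
  have hQ2 : adjoint B ∘ₗ A = A ∘ₗ B := by
    rw [← m3, adjoint_comp, hAsa]
  -- A ∘ adjoint B ∘ A = A
  have hABA : A ∘ₗ adjoint B ∘ₗ A = A := by
    have h := congrArg adjoint m1
    rw [adjoint_comp, adjoint_comp, hAsa] at h
    rw [← comp_assoc]
    exact h
  -- A ∘ adjoint B = B ∘ A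
  have hR2 : A ∘ₗ adjoint B = B ∘ₗ A := by
    rw [← m4, adjoint_comp, hAsa]
  -- w is fixed by Pr
  have hPw : Pr w = w := by
    have hB' : B (Dl ψ) = A (adjoint B (B (Dl ψ))) := by
      have h2 : (B ∘ₗ A) (B (Dl ψ)) = (A ∘ₗ adjoint B) (B (Dl ψ)) := by rw [hR2]
      simp only [comp_apply] at h2
      calc B (Dl ψ) = B (A (B (Dl ψ))) := (mp2 _).symm
        _ = A (adjoint B (B (Dl ψ))) := h2
    rw [hw, hB', hPrA]
  -- elements of ker A satisfy Dl (Pr v) = Pr v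
  have hker : ∀ v, A v = 0 → Dl (Pr v) = Pr v := by
    intro v hv
    set u := Pr v with hu
    have hu1 : Pr u = u := hPp v
    have hu2 : Pr (Dl u) = u := by
      have h0 : Pr v - Pr (Dl (Pr v)) = 0 := by rw [← hAx]; exact hv
      have := sub_eq_zero.mp h0
      exact this.symm
    have e1 : (inner ℂ u (Dl u) : ℂ) = inner ℂ (Dl u) (Dl u) := by
      have h := iD u (Dl u)
      rw [hDp] at h
      exact h.symm
    have e2 : (inner ℂ (Dl u) u : ℂ) = inner ℂ u (Dl u) := iD u u
    have e3 : (inner ℂ u u : ℂ) = inner ℂ u (Dl u) := by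
      calc (inner ℂ u u : ℂ) = inner ℂ u (Pr (Dl u)) := by rw [hu2]
        _ = inner ℂ (Pr u) (Dl u) := (iP u (Dl u)).symm
        _ = inner ℂ u (Dl u) := by rw [hu1]
    have hz : (inner ℂ (u - Dl u) (u - Dl u) : ℂ) = 0 := by
      rw [inner_sub_left, inner_sub_right, inner_sub_right, e1, e2, e3]
      ring
    have := inner_self_eq_zero.mp hz
    have : Dl u = u := by
      have h := sub_eq_zero.mp this
      exact h.symm
    exact this
  -- Pr (Dl ψ) is orthogonal to ker A
  have hperp : ∀ v, A v = 0 → (inner ℂ (Pr (Dl ψ)) v : ℂ) = 0 := by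
    intro v hv
    calc (inner ℂ (Pr (Dl ψ)) v : ℂ) = inner ℂ (Dl ψ) (Pr v) := iP _ _
      _ = inner ℂ ψ (Dl (Pr v)) := iD _ _
      _ = inner ℂ ψ (Pr v) := by rw [hker v hv]
      _ = inner ℂ (Pr ψ) v := (iP ψ v).symm
      _ = 0 := by rw [hψ0, inner_zero_left]
  -- Q fixes Pr (Dl ψ)
  have hQx : A (B (Pr (Dl ψ))) = Pr (Dl ψ) := by
    set x0 := Pr (Dl ψ) with hx0
    have hkx : A (x0 - A (B x0)) = 0 := by
      have h1 : A (adjoint B (A x0)) = A x0 := by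
        have := LinearMap.ext_iff.mp hABA x0
        simpa using this
      have h2 : adjoint B (A x0) = A (B x0) := by
        have := LinearMap.ext_iff.mp hQ2 x0
        simpa using this
      rw [map_sub, ← h2, h1, sub_self]
    have t1 : (inner ℂ x0 (x0 - A (B x0)) : ℂ) = 0 := hperp _ hkx
    have t2 : (inner ℂ (A (B x0)) (x0 - A (B x0)) : ℂ) = 0 := by
      rw [hQsym]
      have h : A (B (x0 - A (B x0))) = 0 := by
        rw [map_sub, map_sub, mp2, sub_self]
      rw [h, inner_zero_right]
    have hz : (inner ℂ (x0 - A (B x0)) (x0 - A (B x0)) : ℂ) = 0 := by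
      rw [inner_sub_left, t1, t2, sub_zero]
    have := inner_self_eq_zero.mp hz
    have h := sub_eq_zero.mp this
    exact h.symm
  -- Q ∘ Pr = Q
  have hQPr : (A ∘ₗ B) ∘ₗ Pr = A ∘ₗ B := by
    have hPrQ : Pr ∘ₗ (A ∘ₗ B) = A ∘ₗ B := by
      ext y
      simp only [comp_apply]
      exact hPrA (B y)
    have h := congrArg adjoint hPrQ
    rw [adjoint_comp, hPra, m3] at h
    exact h
  -- the key identity : A w = Pr (Dl ψ)
  have hAw : A w = Pr (Dl ψ) := by
    rw [hw]
    have h := LinearMap.ext_iff.mp hQPr (Dl ψ)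
    simp only [comp_apply] at h
    rw [show A (B (Dl ψ)) = A (B (Pr (Dl ψ))) from h.symm]
    exact hQx
  -- hence Pr (Dl w) = w - Pr (Dl ψ)
  have key1 : Pr (Dl w) = w - Pr (Dl ψ) := by
    have h : w - Pr (Dl w) = Pr (Dl ψ) := by
      have := hAw
      rw [hAx, hPw] at this
      exact this
    rw [← h]
    abel
  refine ⟨⟨w, hPw⟩, ?_⟩
  -- the projection computation
  set K : Submodule ℂ H := ker Pr ⊓ ker Dl with hK
  set x : H := ψ + w - Dl (ψ + w) with hx
  have hxK : x ∈ K := by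
    rw [hK, Submodule.mem_inf]
    constructor
    · show Pr x = 0
      rw [hx]
      simp only [map_sub, map_add]
      rw [hψ0, hPw, key1]
      abel
    · show Dl x = 0
      rw [hx, map_sub, hDp, sub_self]
  have hproj : ((K.orthogonalProjectionOnto ψ : K) : H) = x := by
    apply Submodule.eq_starProjection_of_mem_of_inner_eq_zero hxK
    intro v hvK
    obtain ⟨hv1, hv2⟩ := Submodule.mem_inf.mp hvK
    have hv1' : Pr v = 0 := hv1
    have hv2' : Dl v = 0 := hv2
    have h1 : ψ - x = Dl (ψ + w) - w := by rw [hx]; abel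
    rw [h1, inner_sub_left, iD, hv2', inner_zero_right, zero_sub, neg_eq_zero,
      ← hPw, iP, hv1', inner_zero_right]
  have hprojval : projL K ψ = x := hproj
  -- final computation
  have hPrd : Pr (Dl (ψ + w)) = w := by
    simp only [map_add]
    rw [key1]
    abel
  have hPrs : Pr (ψ + w) = w := by rw [map_add, hψ0, hPw, zero_add]
  rw [hU]
  simp only [comp_apply, LinearMap.sub_apply, LinearMap.smul_apply, id_apply, id_coe, id_eq]
  rw [map_sub, map_smul, hPrd, hPrs, hprojval, hx]
  module
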